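/- For every δ > 0, the functions F₁ and F₂ are continuously differentiable on ℝ (of class C¹). -/

import Mathlib

/-- For `δ > 0`, the function `F₁` from the decomposition of the logarithmic nonlinearity. -/
noncomputable def F1 (δ : ℝ) (s : ℝ) : ℝ :=
  if s = 0 then 0
  else if |s| < δ then -(1 / 2) * s ^ 2 * Real.log (s ^ 2)
  else -(1 / 2) * s ^ 2 * (Real.log (δ ^ 2) + 3) + 2 * δ * |s| - (1 / 2) * δ ^ 2

/-- For `δ > 0`, the function `F₂` from the decomposition of the logarithmic nonlinearity. -/
noncomputable def F2 (δ : ℝ) (s : ℝ) : ℝ :=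
  if |s| < δ then 0
  else (1 / 2) * s ^ 2 * Real.log (s ^ 2 / δ ^ 2) + 2 * δ * |s| - (3 / 2) * s ^ 2
    - (1 / 2) * δ ^ 2

open Real Set Filter Topology

/-- Candidate derivative of `F1 δ`. -/
noncomputable def G1 (δ s : ℝ) : ℝ :=
  -2 * s * Real.log (min |s| δ) - 3 * s + 2 * max (-δ) (min s δ)

/-- Candidate derivative of `F2 δ`. -/
noncomputable def G2 (δ s : ℝ) : ℝ :=
  2 * s * Real.log (max |s| δ) - 2 * s * Real.log δ - 2 * s + 2 * max (-δ) (min s δ)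

lemma hasDerivAt_abs' {s : ℝ} (hs : s ≠ 0) :
    HasDerivAt (fun x : ℝ => |x|) (if s < 0 then -1 else 1) s := by
  rcases hs.lt_or_gt with h | h
  · rw [if_pos h]
    refine (hasDerivAt_neg s).congr_of_eventuallyEq ?_
    filter_upwards [eventually_lt_nhds h] with x hx
    exact abs_of_neg hx
  · rw [if_neg (not_lt.2 h.le)]
    refine (hasDerivAt_id s).congr_of_eventuallyEq ?_
    filter_upwards [eventually_gt_nhds h] with x hx
    exact abs_of_pos hx

lemma hasDerivAt_I1 {s : ℝ} (hs : s ≠ 0) :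
    HasDerivAt (fun x : ℝ => -(1 / 2) * x ^ 2 * Real.log (x ^ 2))
      (-(s * Real.log (s ^ 2) + s)) s := by
  have h1 : HasDerivAt (fun x : ℝ => x ^ 2) (2 * s) s := by
    simpa using hasDerivAt_pow 2 s
  have hlog : HasDerivAt (fun x : ℝ => Real.log (x ^ 2)) (2 * s / s ^ 2) s :=
    h1.log (pow_ne_zero 2 hs)
  have h := ((h1.mul hlog).const_mul (-(1 / 2) : ℝ))
  have heq : (fun x : ℝ => -(1 / 2) * x ^ 2 * Real.log (x ^ 2))
      = fun x : ℝ => -(1 / 2) * (x ^ 2 * Real.log (x ^ 2)) := by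
    funext x; ring
  rw [heq]
  refine h.congr_deriv ?_
  field_simp

lemma hasDerivAt_I1_zero :
    HasDerivAt (fun x : ℝ => -(1 / 2) * x ^ 2 * Real.log (x ^ 2)) 0 0 := by
  rw [hasDerivAt_iff_tendsto_slope]
  have hev : (fun x : ℝ => -(x * Real.log x))
      =ᶠ[𝓝[≠] (0 : ℝ)] slope (fun x : ℝ => -(1 / 2) * x ^ 2 * Real.log (x ^ 2)) 0 := by
    filter_upwards [self_mem_nhdsWithin] with x hx
    have hx' : x ≠ 0 := hx
    rw [slope_def_field, Real.log_pow]
    field_simp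
    ring
  have hc : Filter.Tendsto (fun x : ℝ => -(x * Real.log x)) (𝓝[≠] (0 : ℝ)) (𝓝 0) := by
    have := (Real.continuous_mul_log.neg.tendsto 0)
    simp only [Pi.neg_apply, Real.log_zero, mul_zero, neg_zero] at this
    exact this.mono_left nhdsWithin_le_nhds
  exact hc.congr' hev

lemma hasDerivAt_O1 (δ : ℝ) {s : ℝ} (hs : s ≠ 0) :
    HasDerivAt
      (fun x : ℝ => -(1 / 2) * x ^ 2 * (Real.log (δ ^ 2) + 3) + 2 * δ * |x| - 1 / 2 * δ ^ 2)
      (-(s * (Real.log (δ ^ 2) + 3)) + 2 * δ * (if s < 0 then -1 else 1)) s := by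
  have h1 : HasDerivAt (fun x : ℝ => x ^ 2) (2 * s) s := by
    simpa using hasDerivAt_pow 2 s
  have h2 := hasDerivAt_abs' hs
  have h := (((h1.const_mul (-(1 / 2) : ℝ)).mul_const (Real.log (δ ^ 2) + 3)).add
      (h2.const_mul (2 * δ))).sub_const (1 / 2 * δ ^ 2)
  refine h.congr_deriv ?_
  ring

lemma hasDerivAt_O2 (δ : ℝ) (hδ : 0 < δ) {s : ℝ} (hs : s ≠ 0) :
    HasDerivAt
      (fun x : ℝ => 1 / 2 * x ^ 2 * Real.log (x ^ 2 / δ ^ 2) + 2 * δ * |x| - 3 / 2 * x ^ 2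
        - 1 / 2 * δ ^ 2)
      (s * Real.log (s ^ 2 / δ ^ 2) - 2 * s + 2 * δ * (if s < 0 then -1 else 1)) s := by
  have h1 : HasDerivAt (fun x : ℝ => x ^ 2) (2 * s) s := by
    simpa using hasDerivAt_pow 2 s
  have h2 := hasDerivAt_abs' hs
  have h3 : HasDerivAt (fun x : ℝ => x ^ 2 / δ ^ 2) (2 * s / δ ^ 2) s := h1.div_const _
  have harg : s ^ 2 / δ ^ 2 ≠ 0 := div_ne_zero (pow_ne_zero 2 hs) (pow_ne_zero 2 hδ.ne')
  have hlog : HasDerivAt (fun x : ℝ => Real.log (x ^ 2 / δ ^ 2))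
      ((2 * s / δ ^ 2) / (s ^ 2 / δ ^ 2)) s := h3.log harg
  have h := ((((h1.const_mul ((1:ℝ) / 2)).mul hlog).add
      (h2.const_mul (2 * δ))).sub (h1.const_mul ((3:ℝ) / 2))).sub_const (1 / 2 * δ ^ 2)
  have hinv : (2 * s / δ ^ 2) / (s ^ 2 / δ ^ 2) = 2 / s := by
    field_simp
  rw [hinv] at h
  refine h.congr_deriv ?_
  have hterm : 1 / 2 * s ^ 2 * (2 / s) = s := by
    field_simp
  rw [hterm]
  ring

lemma F1_eq_inner {δ : ℝ} (hδ : 0 < δ) {s : ℝ} (h : |s| ≤ δ) :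
    F1 δ s = -(1 / 2) * s ^ 2 * Real.log (s ^ 2) := by
  by_cases h0 : s = 0
  · simp [F1, h0]
  by_cases hlt : |s| < δ
  · simp [F1, h0, hlt]
  · have habs : |s| = δ := le_antisymm h (not_lt.1 hlt)
    have hs2 : s ^ 2 = δ ^ 2 := by rw [← sq_abs, habs]
    rw [F1, if_neg h0, if_neg hlt, habs, hs2]
    ring

lemma F1_eq_outer {δ : ℝ} (hδ : 0 < δ) {s : ℝ} (h : δ ≤ |s|) :
    F1 δ s = -(1 / 2) * s ^ 2 * (Real.log (δ ^ 2) + 3) + 2 * δ * |s| - 1 / 2 * δ ^ 2 := by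
  have h0 : s ≠ 0 := by
    intro hs
    rw [hs] at h
    simp at h
    linarith
  rw [F1, if_neg h0, if_neg (not_lt.2 h)]

lemma F2_eq_inner {δ : ℝ} (hδ : 0 < δ) {s : ℝ} (h : |s| ≤ δ) : F2 δ s = 0 := by
  by_cases hlt : |s| < δ
  · simp [F2, hlt]
  · have habs : |s| = δ := le_antisymm h (not_lt.1 hlt)
    have hs2 : s ^ 2 = δ ^ 2 := by rw [← sq_abs, habs]
    rw [F2, if_neg hlt, habs, hs2, div_self (pow_ne_zero 2 hδ.ne'), Real.log_one]
    ring

lemma F2_eq_outer {δ : ℝ} {s : ℝ} (h : δ ≤ |s|) :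
    F2 δ s = 1 / 2 * s ^ 2 * Real.log (s ^ 2 / δ ^ 2) + 2 * δ * |s| - 3 / 2 * s ^ 2
      - 1 / 2 * δ ^ 2 := by
  rw [F2, if_neg (not_lt.2 h)]

lemma F1_hasDerivAt {δ : ℝ} (hδ : 0 < δ) (s : ℝ) : HasDerivAt (F1 δ) (G1 δ s) s := by
  rcases lt_trichotomy |s| δ with hlt | heq0 | hgt
  · -- |s| < δ
    have hev : F1 δ =ᶠ[𝓝 s] fun x => -(1 / 2) * x ^ 2 * Real.log (x ^ 2) := by
      have ho : IsOpen {x : ℝ | |x| < δ} := isOpen_lt continuous_abs continuous_const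
      filter_upwards [ho.mem_nhds hlt] with x hx
      exact F1_eq_inner hδ (le_of_lt hx)
    by_cases h0 : s = 0
    · subst h0
      have hval : G1 δ 0 = 0 := by
        simp [G1, hδ.le, le_of_lt (neg_lt_zero.2 hδ)]
      rw [hval]
      exact hasDerivAt_I1_zero.congr_of_eventuallyEq hev
    · have hval : G1 δ s = -(s * Real.log (s ^ 2) + s) := by
        have h1 : min |s| δ = |s| := min_eq_left hlt.le
        have h2 : max (-δ) (min s δ) = s := by
          rw [min_eq_left (le_of_lt (abs_lt.1 hlt).2), max_eq_right (le_of_lt (abs_lt.1 hlt).1)]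
        rw [G1, h1, h2, Real.log_abs, Real.log_pow]
        push_cast
        ring
      rw [hval]
      exact (hasDerivAt_I1 h0).congr_of_eventuallyEq hev
  · -- |s| = δ
    rcases (abs_eq hδ.le).1 heq0 with h | h
    · rw [h]
      have hval : G1 δ δ = -(δ * Real.log (δ ^ 2) + δ) := by
        rw [G1, abs_of_pos hδ, min_self, max_eq_right (by linarith : -δ ≤ δ), Real.log_pow]
        push_cast
        ring
      rw [hval]
      have hIic : HasDerivWithinAt (F1 δ) (-(δ * Real.log (δ ^ 2) + δ)) (Iic δ) δ := by
        refine (hasDerivAt_I1 hδ.ne').hasDerivWithinAt.congr_of_eventuallyEq ?_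
          (F1_eq_inner hδ (by rw [abs_of_pos hδ]))
        filter_upwards [self_mem_nhdsWithin,
          (eventually_gt_nhds hδ).filter_mono nhdsWithin_le_nhds] with x hx1 hx2
        exact F1_eq_inner hδ (by rw [abs_of_pos hx2]; exact hx1)
      have hIci : HasDerivWithinAt (F1 δ)
          (-(δ * (Real.log (δ ^ 2) + 3)) + 2 * δ * (if δ < 0 then -1 else 1)) (Ici δ) δ := by
        refine (hasDerivAt_O1 δ hδ.ne').hasDerivWithinAt.congr ?_
          (F1_eq_outer hδ (by rw [abs_of_pos hδ]))
        intro x hx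
        exact F1_eq_outer hδ (le_trans hx (le_abs_self x))
      rw [if_neg (not_lt.2 hδ.le)] at hIci
      have hd : -(δ * (Real.log (δ ^ 2) + 3)) + 2 * δ * 1 = -(δ * Real.log (δ ^ 2) + δ) := by
        ring
      rw [hd] at hIci
      have hu := hIic.union hIci
      rw [Iic_union_Ici] at hu
      exact hasDerivWithinAt_univ.1 hu
    · -- s = -δ
      rw [h]
      have hnd : (-δ : ℝ) ≠ 0 := by simp [hδ.ne']
      have hval : G1 δ (-δ) = -((-δ) * Real.log ((-δ) ^ 2) + (-δ)) := by
        rw [G1, abs_neg, abs_of_pos hδ, min_self, neg_sq,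
          min_eq_left (by linarith : -δ ≤ δ), max_self, Real.log_pow]
        push_cast
        ring
      rw [hval]
      have hIci : HasDerivWithinAt (F1 δ) (-((-δ) * Real.log ((-δ) ^ 2) + (-δ))) (Ici (-δ)) (-δ) := by
        refine (hasDerivAt_I1 hnd).hasDerivWithinAt.congr_of_eventuallyEq ?_
          (F1_eq_inner hδ (by rw [abs_neg, abs_of_pos hδ]))
        filter_upwards [self_mem_nhdsWithin,
          (eventually_lt_nhds (neg_lt_zero.2 hδ)).filter_mono nhdsWithin_le_nhds] with x hx1 hx2
        refine F1_eq_inner hδ ?_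
        rw [abs_of_neg hx2]
        have : -δ ≤ x := hx1
        linarith
      have hIic : HasDerivWithinAt (F1 δ)
          (-((-δ) * (Real.log (δ ^ 2) + 3)) + 2 * δ * (if (-δ : ℝ) < 0 then -1 else 1))
          (Iic (-δ)) (-δ) := by
        refine (hasDerivAt_O1 δ hnd).hasDerivWithinAt.congr ?_
          (F1_eq_outer hδ (by rw [abs_neg, abs_of_pos hδ]))
        intro x hx
        refine F1_eq_outer hδ ?_
        have : x ≤ -δ := hx
        calc δ ≤ -x := by linarith
        _ ≤ |x| := neg_le_abs x
      rw [if_pos (neg_lt_zero.2 hδ)] at hIic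
      have hd : -((-δ) * (Real.log (δ ^ 2) + 3)) + 2 * δ * (-1)
          = -((-δ) * Real.log ((-δ) ^ 2) + (-δ)) := by
        rw [neg_sq]
        ring
      rw [hd] at hIic
      have hu := hIic.union hIci
      rw [Iic_union_Ici] at hu
      exact hasDerivWithinAt_univ.1 hu
  · -- |s| > δ
    have h0 : s ≠ 0 := by
      intro hs
      rw [hs] at hgt
      simp at hgt
      linarith
    have hev : F1 δ =ᶠ[𝓝 s] fun x =>
        -(1 / 2) * x ^ 2 * (Real.log (δ ^ 2) + 3) + 2 * δ * |x| - 1 / 2 * δ ^ 2 := by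
      have ho : IsOpen {x : ℝ | δ < |x|} := isOpen_lt continuous_const continuous_abs
      filter_upwards [ho.mem_nhds hgt] with x hx
      exact F1_eq_outer hδ (le_of_lt hx)
    have hval : G1 δ s = -(s * (Real.log (δ ^ 2) + 3)) + 2 * δ * (if s < 0 then -1 else 1) := by
      have hmin : min |s| δ = δ := min_eq_right hgt.le
      rcases h0.lt_or_gt with hneg | hpos
      · have hsle : s ≤ -δ := by
          rw [abs_of_neg hneg] at hgt
          linarith
        rw [G1, hmin, min_eq_left (by linarith : s ≤ δ), max_eq_left hsle, if_pos hneg,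
          Real.log_pow]
        push_cast
        ring
      · have hsge : δ ≤ s := by
          rw [abs_of_pos hpos] at hgt
          linarith
        rw [G1, hmin, min_eq_right hsge, max_eq_right (by linarith : -δ ≤ δ),
          if_neg (not_lt.2 hpos.le), Real.log_pow]
        push_cast
        ring
    rw [hval]
    exact (hasDerivAt_O1 δ h0).congr_of_eventuallyEq hev

lemma F2_hasDerivAt {δ : ℝ} (hδ : 0 < δ) (s : ℝ) : HasDerivAt (F2 δ) (G2 δ s) s := by
  rcases lt_trichotomy |s| δ with hlt | heq0 | hgt
  · -- |s| < δ
    have hval : G2 δ s = 0 := by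
      rw [G2, max_eq_right hlt.le, min_eq_left (le_of_lt (abs_lt.1 hlt).2),
        max_eq_right (le_of_lt (abs_lt.1 hlt).1)]
      ring
    rw [hval]
    have hev : F2 δ =ᶠ[𝓝 s] fun _ => (0 : ℝ) := by
      have ho : IsOpen {x : ℝ | |x| < δ} := isOpen_lt continuous_abs continuous_const
      filter_upwards [ho.mem_nhds hlt] with x hx
      exact F2_eq_inner hδ (le_of_lt hx)
    exact (hasDerivAt_const s (0 : ℝ)).congr_of_eventuallyEq hev
  · -- |s| = δ
    rcases (abs_eq hδ.le).1 heq0 with h | h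
    · rw [h]
      have hval : G2 δ δ = 0 := by
        rw [G2, abs_of_pos hδ, max_self, min_self, max_eq_right (by linarith : -δ ≤ δ)]
        ring
      rw [hval]
      have hIic : HasDerivWithinAt (F2 δ) 0 (Iic δ) δ := by
        refine (hasDerivAt_const δ (0 : ℝ)).hasDerivWithinAt.congr_of_eventuallyEq ?_
          (F2_eq_inner hδ (by rw [abs_of_pos hδ]))
        filter_upwards [self_mem_nhdsWithin,
          (eventually_gt_nhds hδ).filter_mono nhdsWithin_le_nhds] with x hx1 hx2
        exact F2_eq_inner hδ (by rw [abs_of_pos hx2]; exact hx1)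
      have hIci : HasDerivWithinAt (F2 δ)
          (δ * Real.log (δ ^ 2 / δ ^ 2) - 2 * δ + 2 * δ * (if δ < 0 then -1 else 1))
          (Ici δ) δ := by
        refine (hasDerivAt_O2 δ hδ hδ.ne').hasDerivWithinAt.congr ?_
          (F2_eq_outer (by rw [abs_of_pos hδ]))
        intro x hx
        exact F2_eq_outer (le_trans hx (le_abs_self x))
      rw [if_neg (not_lt.2 hδ.le), div_self (pow_ne_zero 2 hδ.ne'), Real.log_one] at hIci
      have hd : δ * 0 - 2 * δ + 2 * δ * 1 = (0 : ℝ) := by ring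
      rw [hd] at hIci
      have hu := hIic.union hIci
      rw [Iic_union_Ici] at hu
      exact hasDerivWithinAt_univ.1 hu
    · -- s = -δ
      rw [h]
      have hnd : (-δ : ℝ) ≠ 0 := by simp [hδ.ne']
      have hval : G2 δ (-δ) = 0 := by
        rw [G2, abs_neg, abs_of_pos hδ, max_self, min_eq_left (by linarith : -δ ≤ δ),
          max_eq_left (le_refl (-δ))]
        ring
      rw [hval]
      have hIci : HasDerivWithinAt (F2 δ) 0 (Ici (-δ)) (-δ) := by
        refine (hasDerivAt_const (-δ) (0 : ℝ)).hasDerivWithinAt.congr_of_eventuallyEq ?_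
          (F2_eq_inner hδ (by rw [abs_neg, abs_of_pos hδ]))
        filter_upwards [self_mem_nhdsWithin,
          (eventually_lt_nhds (neg_lt_zero.2 hδ)).filter_mono nhdsWithin_le_nhds] with x hx1 hx2
        refine F2_eq_inner hδ ?_
        rw [abs_of_neg hx2]
        have : -δ ≤ x := hx1
        linarith
      have hIic : HasDerivWithinAt (F2 δ)
          ((-δ) * Real.log ((-δ) ^ 2 / δ ^ 2) - 2 * (-δ) + 2 * δ * (if (-δ : ℝ) < 0 then -1 else 1))
          (Iic (-δ)) (-δ) := by
        refine (hasDerivAt_O2 δ hδ hnd).hasDerivWithinAt.congr ?_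
          (F2_eq_outer (by rw [abs_neg, abs_of_pos hδ]))
        intro x hx
        refine F2_eq_outer ?_
        have : x ≤ -δ := hx
        calc δ ≤ -x := by linarith
        _ ≤ |x| := neg_le_abs x
      rw [if_pos (neg_lt_zero.2 hδ), neg_sq, div_self (pow_ne_zero 2 hδ.ne'),
        Real.log_one] at hIic
      have hd : (-δ) * 0 - 2 * (-δ) + 2 * δ * (-1) = (0 : ℝ) := by ring
      rw [hd] at hIic
      have hu := hIic.union hIci
      rw [Iic_union_Ici] at hu
      exact hasDerivWithinAt_univ.1 hu
  · -- |s| > δ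
    have h0 : s ≠ 0 := by
      intro hs
      rw [hs] at hgt
      simp at hgt
      linarith
    have hev : F2 δ =ᶠ[𝓝 s] fun x =>
        1 / 2 * x ^ 2 * Real.log (x ^ 2 / δ ^ 2) + 2 * δ * |x| - 3 / 2 * x ^ 2
          - 1 / 2 * δ ^ 2 := by
      have ho : IsOpen {x : ℝ | δ < |x|} := isOpen_lt continuous_const continuous_abs
      filter_upwards [ho.mem_nhds hgt] with x hx
      exact F2_eq_outer (le_of_lt hx)
    have hval : G2 δ s
        = s * Real.log (s ^ 2 / δ ^ 2) - 2 * s + 2 * δ * (if s < 0 then -1 else 1) := by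
      have hmax : max |s| δ = |s| := max_eq_left hgt.le
      have hlog : Real.log (s ^ 2 / δ ^ 2) = 2 * Real.log |s| - 2 * Real.log δ := by
        rw [Real.log_div (pow_ne_zero 2 h0) (pow_ne_zero 2 hδ.ne'), Real.log_pow, Real.log_pow,
          Real.log_abs]
        push_cast
        ring
      rcases h0.lt_or_gt with hneg | hpos
      · have hsle : s ≤ -δ := by
          rw [abs_of_neg hneg] at hgt
          linarith
        rw [G2, hmax, hlog, min_eq_left (by linarith : s ≤ δ), max_eq_left hsle, if_pos hneg]
        ring
      · have hsge : δ ≤ s := by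
          rw [abs_of_pos hpos] at hgt
          linarith
        rw [G2, hmax, hlog, min_eq_right hsge, max_eq_right (by linarith : -δ ≤ δ),
          if_neg (not_lt.2 hpos.le)]
        ring
    rw [hval]
    exact (hasDerivAt_O2 δ hδ h0).congr_of_eventuallyEq hev

lemma G1_continuous {δ : ℝ} (hδ : 0 < δ) : Continuous (G1 δ) := by
  rw [continuous_iff_continuousAt]
  intro s
  by_cases hs : s = 0
  · subst hs
    have hc : ContinuousAt
        (fun x : ℝ => -2 * (x * Real.log x) - 3 * x + 2 * max (-δ) (min x δ)) 0 := by
      refine ContinuousAt.add (ContinuousAt.sub ?_ ?_) ?_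
      · exact (continuous_const.mul Real.continuous_mul_log).continuousAt
      · exact (continuous_const.mul continuous_id).continuousAt
      · exact (continuous_const.mul
          (continuous_const.max (continuous_id.min continuous_const))).continuousAt
    refine hc.congr ?_
    have ho : IsOpen {x : ℝ | |x| < δ} := isOpen_lt continuous_abs continuous_const
    filter_upwards [ho.mem_nhds (by simpa using hδ)] with x hx
    rw [G1, min_eq_left (le_of_lt hx), Real.log_abs]
    ring
  · have hlog : ContinuousAt (fun x : ℝ => Real.log (min |x| δ)) s := by
      have hpos : min |s| δ ≠ 0 := ne_of_gt (lt_min (abs_pos.2 hs) hδ)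
      exact ContinuousAt.log ((continuous_abs.min continuous_const).continuousAt) hpos
    have : ContinuousAt
        (fun x : ℝ => -2 * x * Real.log (min |x| δ) - 3 * x + 2 * max (-δ) (min x δ)) s := by
      refine ContinuousAt.add (ContinuousAt.sub ?_ ?_) ?_
      · exact ((continuous_const.mul continuous_id).continuousAt.mul hlog)
      · exact (continuous_const.mul continuous_id).continuousAt
      · exact (continuous_const.mul
          (continuous_const.max (continuous_id.min continuous_const))).continuousAt
    exact this

lemma G2_continuous {δ : ℝ} (hδ : 0 < δ) : Continuous (G2 δ) := by
  have hlog : Continuous fun x : ℝ => Real.log (max |x| δ) := by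
    rw [continuous_iff_continuousAt]
    intro s
    have hpos : max |s| δ ≠ 0 := ne_of_gt (lt_of_lt_of_le hδ (le_max_right _ _))
    exact ContinuousAt.log ((continuous_abs.max continuous_const).continuousAt) hpos
  have : Continuous
      (fun x : ℝ => 2 * x * Real.log (max |x| δ) - 2 * x * Real.log δ - 2 * x
        + 2 * max (-δ) (min x δ)) := by
    refine Continuous.add (Continuous.sub (Continuous.sub ?_ ?_) ?_) ?_
    · exact (continuous_const.mul continuous_id).mul hlog
    · exact (continuous_const.mul continuous_id).mul continuous_const
    · exact continuous_const.mul continuous_id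
    · exact continuous_const.mul (continuous_const.max (continuous_id.min continuous_const))
  exact this

/-- For every `δ > 0`, the functions `F₁` and `F₂` are continuously
differentiable on `ℝ` (of class `C¹`). -/
theorem F1_F2_contDiff (δ : ℝ) (hδ : 0 < δ) :
    ContDiff ℝ 1 (F1 δ) ∧ ContDiff ℝ 1 (F2 δ) := by
  constructor
  · rw [contDiff_one_iff_deriv]
    refine ⟨fun s => (F1_hasDerivAt hδ s).differentiableAt, ?_⟩
    have hd : deriv (F1 δ) = G1 δ := funext fun s => (F1_hasDerivAt hδ s).deriv
    rw [hd]
    exact G1_continuous hδ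
  · rw [contDiff_one_iff_deriv]
    refine ⟨fun s => (F2_hasDerivAt hδ s).differentiableAt, ?_⟩
    have hd : deriv (F2 δ) = G2 δ := funext fun s => (F2_hasDerivAt hδ s).deriv
    rw [hd]
    exact G2_continuous hδ
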